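/- Let (π : A → B, ⊞, 0) be as in the context. Then for all x, x' ∈ F(A) and b ∈ B (elements of B acting on A through 0): (x·x')·b = ⊞(Σ (x·b₍₁₎) ⊗ (x'·b₍₂₎)) and b·(x·x') = ⊞(Σ (b₍₁₎·x) ⊗ (b₍₂₎·x')), where in particular the displayed tensors lie in A⊗_B A. -/

import Mathlib

open TensorProduct

namespace FormalLoops

variable (k : Type*) [Field k]

/-- A unital, not necessarily associative, bialgebra with left and right divisions:
a cocommutative coassociative counital coalgebra together with a bilinear unital
multiplication and bilinear left/right divisions which are coalgebra morphisms and
satisfy the division cancellation laws (in Sweedler form). -/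
structure DivBialg (A : Type*) [AddCommGroup A] [Module k A] where
  Δ : A →ₗ[k] A ⊗[k] A
  ε : A →ₗ[k] k
  mul : A →ₗ[k] A →ₗ[k] A
  one : A
  ld : A →ₗ[k] A →ₗ[k] A
  rd : A →ₗ[k] A →ₗ[k] A
  coassoc : ∀ u : A, (TensorProduct.assoc k A A A) ((Δ.rTensor A) (Δ u)) = (Δ.lTensor A) (Δ u)
  counit_left : ∀ u : A, (TensorProduct.lid k A) ((ε.rTensor A) (Δ u)) = u
  counit_right : ∀ u : A, (TensorProduct.rid k A) ((ε.lTensor A) (Δ u)) = u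
  cocomm : ∀ u : A, (TensorProduct.comm k A A) (Δ u) = Δ u
  Δ_one : Δ one = one ⊗ₜ[k] one
  ε_one : ε one = 1
  one_mul : ∀ u, mul one u = u
  mul_one : ∀ u, mul u one = u
  Δ_mul : ∀ u v, Δ (mul u v) = TensorProduct.map₂ mul mul (Δ u) (Δ v)
  ε_mul : ∀ u v, ε (mul u v) = ε u * ε v
  Δ_ld : ∀ u v, Δ (ld u v) = TensorProduct.map₂ ld ld (Δ u) (Δ v)
  ε_ld : ∀ u v, ε (ld u v) = ε u * ε v
  Δ_rd : ∀ u v, Δ (rd u v) = TensorProduct.map₂ rd rd (Δ u) (Δ v)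
  ε_rd : ∀ u v, ε (rd u v) = ε u * ε v
  /-- Σ u₍₁₎\(u₍₂₎v) = ε(u)v -/
  ld_mul_cancel : ∀ u v, TensorProduct.lift ld ((LinearMap.lTensor A (mul.flip v)) (Δ u)) = ε u • v
  /-- Σ u₍₁₎(u₍₂₎\v) = ε(u)v -/
  mul_ld_cancel : ∀ u v, TensorProduct.lift mul ((LinearMap.lTensor A (ld.flip v)) (Δ u)) = ε u • v
  /-- Σ (vu₍₁₎)/u₍₂₎ = ε(u)v -/
  rd_mul_cancel : ∀ u v, TensorProduct.lift rd ((LinearMap.rTensor A (mul v)) (Δ u)) = ε u • v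
  /-- Σ (v/u₍₁₎)u₍₂₎ = ε(u)v -/
  mul_rd_cancel : ∀ u v, TensorProduct.lift mul ((LinearMap.rTensor A (rd v)) (Δ u)) = ε u • v

variable {A B : Type*} [AddCommGroup A] [Module k A] [AddCommGroup B] [Module k B]

/-- A morphism of unital bialgebras with divisions. -/
structure DivBialgHom (SA : DivBialg k A) (SB : DivBialg k B) (π : A →ₗ[k] B) : Prop where
  map_Δ : ∀ u, TensorProduct.map π π (SA.Δ u) = SB.Δ (π u)
  map_ε : ∀ u, SB.ε (π u) = SA.ε u
  map_mul : ∀ u v, π (SA.mul u v) = SB.mul (π u) (π v)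
  map_one : π SA.one = SB.one
  map_ld : ∀ u v, π (SA.ld u v) = SB.ld (π u) (π v)
  map_rd : ∀ u v, π (SA.rd u v) = SB.rd (π u) (π v)

/-- `D` is a subcoalgebra w.r.t. the comultiplication `Δ`: `Δ(D) ⊆ D ⊗ D`. -/
def IsSubcoalg {M : Type*} [AddCommGroup M] [Module k M] (Δ : M →ₗ[k] M ⊗[k] M)
    (D : Submodule k M) : Prop :=
  ∀ x ∈ D, Δ x ∈ LinearMap.range (TensorProduct.map D.subtype D.subtype)

/-- `F(A)`: the sum of all subcoalgebras `D ⊆ A` on which `π = ε(·) • 1`. -/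
def Fsub (SA : DivBialg k A) (oneB : B) (π : A →ₗ[k] B) : Submodule k A :=
  sSup {D : Submodule k A | IsSubcoalg k SA.Δ D ∧ ∀ x ∈ D, π x = SA.ε x • oneB}

end FormalLoops

namespace FormalLoops

variable (k : Type*) [Field k]
variable {A B : Type*} [AddCommGroup A] [Module k A] [AddCommGroup B] [Module k B]

/-- The comultiplication of the tensor-product coalgebra `A ⊗ A`. -/
noncomputable def tcomul (SA : DivBialg k A) :
    A ⊗[k] A →ₗ[k] (A ⊗[k] A) ⊗[k] (A ⊗[k] A) :=
  (TensorProduct.tensorTensorTensorComm k A A A A).toLinearMap ∘ₗ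
    TensorProduct.map SA.Δ SA.Δ

/-- The counit of the tensor-product coalgebra `A ⊗ A`. -/
noncomputable def tcounit (SA : DivBialg k A) : A ⊗[k] A →ₗ[k] k :=
  (TensorProduct.lid k k).toLinearMap ∘ₗ TensorProduct.map SA.ε SA.ε

/-- The linear map `A ⊗ A → B`, `u ⊗ v ↦ ε(v) π(u)`. -/
noncomputable def pbFst (SA : DivBialg k A) (π : A →ₗ[k] B) : A ⊗[k] A →ₗ[k] B :=
  (TensorProduct.rid k B).toLinearMap ∘ₗ TensorProduct.map π SA.ε

/-- The linear map `A ⊗ A → B`, `u ⊗ v ↦ ε(u) π(v)`. -/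
noncomputable def pbSnd (SA : DivBialg k A) (π : A →ₗ[k] B) : A ⊗[k] A →ₗ[k] B :=
  (TensorProduct.lid k B).toLinearMap ∘ₗ TensorProduct.map SA.ε π

/-- The pullback `A ⊗_B A`: the sum of all subcoalgebras of the tensor-product
coalgebra `A ⊗ A` on which `u ⊗ v ↦ ε(v)π(u)` and `u ⊗ v ↦ ε(u)π(v)` agree. -/
noncomputable def pbSub (SA : DivBialg k A) (π : A →ₗ[k] B) : Submodule k (A ⊗[k] A) :=
  sSup {C : Submodule k (A ⊗[k] A) | IsSubcoalg k (tcomul k SA) C ∧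
    ∀ t ∈ C, pbFst k SA π t = pbSnd k SA π t}

/-- The data of an abelian group `(π : A → B, ⊞, 0)` in the comma category over `B`:
a linear map `⊞ = bp : A ⊗_B A → A` which lies over `B`, is a coalgebra morphism
(witnessed by a corestriction `Δpb` of the comultiplication of `A ⊗ A` to `A ⊗_B A`),
is multiplicative, commutative, associative on `F(A)` and has `0 = z ∘ π` as unit. -/
structure BoxPlusData (SA : DivBialg k A) (SB : DivBialg k B)
    (π : A →ₗ[k] B) (z : B →ₗ[k] A) where
  bp : ↥(pbSub k SA π) →ₗ[k] A
  Δpb : ↥(pbSub k SA π) →ₗ[k] (↥(pbSub k SA π) ⊗[k] ↥(pbSub k SA π))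
  Δpb_compat : ∀ t : pbSub k SA π,
    TensorProduct.map (pbSub k SA π).subtype (pbSub k SA π).subtype (Δpb t)
      = tcomul k SA (t : A ⊗[k] A)
  π_bp : ∀ t : pbSub k SA π, π (bp t) = pbFst k SA π (t : A ⊗[k] A)
  Δ_bp : ∀ t : pbSub k SA π, SA.Δ (bp t) = TensorProduct.map bp bp (Δpb t)
  ε_bp : ∀ t : pbSub k SA π, SA.ε (bp t) = tcounit k SA (t : A ⊗[k] A)
  bp_mul : ∀ (t t' : pbSub k SA π)
      (h : TensorProduct.map₂ SA.mul SA.mul (t : A ⊗[k] A) (t' : A ⊗[k] A) ∈ pbSub k SA π),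
      bp ⟨TensorProduct.map₂ SA.mul SA.mul (t : A ⊗[k] A) (t' : A ⊗[k] A), h⟩
        = SA.mul (bp t) (bp t')
  bp_flip : ∀ (t : pbSub k SA π)
      (h : (TensorProduct.comm k A A) (t : A ⊗[k] A) ∈ pbSub k SA π),
      bp ⟨(TensorProduct.comm k A A) (t : A ⊗[k] A), h⟩ = bp t
  bp_assoc : ∀ x ∈ Fsub k SA SB.one π, ∀ y ∈ Fsub k SA SB.one π, ∀ w ∈ Fsub k SA SB.one π,
      ∀ (h1 : x ⊗ₜ[k] y ∈ pbSub k SA π) (h2 : y ⊗ₜ[k] w ∈ pbSub k SA π)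
        (h3 : (bp ⟨x ⊗ₜ[k] y, h1⟩) ⊗ₜ[k] w ∈ pbSub k SA π)
        (h4 : x ⊗ₜ[k] (bp ⟨y ⊗ₜ[k] w, h2⟩) ∈ pbSub k SA π),
      bp ⟨(bp ⟨x ⊗ₜ[k] y, h1⟩) ⊗ₜ[k] w, h3⟩ = bp ⟨x ⊗ₜ[k] (bp ⟨y ⊗ₜ[k] w, h2⟩), h4⟩
  bp_unit_right : ∀ (u : A)
      (h : (LinearMap.lTensor A (z ∘ₗ π)) (SA.Δ u) ∈ pbSub k SA π),
      bp ⟨(LinearMap.lTensor A (z ∘ₗ π)) (SA.Δ u), h⟩ = u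
  bp_unit_left : ∀ (u : A)
      (h : (LinearMap.rTensor A (z ∘ₗ π)) (SA.Δ u) ∈ pbSub k SA π),
      bp ⟨(LinearMap.rTensor A (z ∘ₗ π)) (SA.Δ u), h⟩ = u

end FormalLoops

namespace FormalLoops

section Helpers

variable {k : Type*} [Field k]
variable {A B M : Type*} [AddCommGroup A] [Module k A] [AddCommGroup B] [Module k B]
  [AddCommGroup M] [Module k M]

open TensorProduct LinearMap

lemma range_map_subtype_mono {D E : Submodule k M} (h : D ≤ E) :
    LinearMap.range (TensorProduct.map D.subtype D.subtype) ≤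
      LinearMap.range (TensorProduct.map E.subtype E.subtype) := by
  have heq : (TensorProduct.map E.subtype E.subtype) ∘ₗ
      (TensorProduct.map (Submodule.inclusion h) (Submodule.inclusion h))
      = TensorProduct.map D.subtype D.subtype := by
    rw [← TensorProduct.map_comp]; rfl
  rw [← heq]
  exact LinearMap.range_comp_le_range _ _

section Midswap

variable (Δm : M →ₗ[k] M ⊗[k] M)

/-- swap of the first two legs of `M ⊗ (M ⊗ M)`. -/
noncomputable def s12 : M ⊗[k] (M ⊗[k] M) →ₗ[k] M ⊗[k] (M ⊗[k] M) :=
  (TensorProduct.assoc k M M M).toLinearMap ∘ₗ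
    (LinearMap.rTensor M (TensorProduct.comm k M M).toLinearMap) ∘ₗ
    (TensorProduct.assoc k M M M).symm.toLinearMap

lemma s12_fix
    (hco : ∀ u : M, (TensorProduct.assoc k M M M) ((Δm.rTensor M) (Δm u)) = (Δm.lTensor M) (Δm u))
    (hcc : ∀ u : M, (TensorProduct.comm k M M) (Δm u) = Δm u) (c : M) :
    s12 ((Δm.lTensor M) (Δm c)) = (Δm.lTensor M) (Δm c) := by
  have hcomm : (TensorProduct.comm k M M).toLinearMap ∘ₗ Δm = Δm := LinearMap.ext hcc
  have h1 : (TensorProduct.assoc k M M M).symm ((Δm.lTensor M) (Δm c))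
      = (Δm.rTensor M) (Δm c) := by
    rw [← hco]; exact (TensorProduct.assoc k M M M).symm_apply_apply _
  have h2 : (LinearMap.rTensor M (TensorProduct.comm k M M).toLinearMap)
      ((Δm.rTensor M) (Δm c)) = (Δm.rTensor M) (Δm c) := by
    rw [← LinearMap.comp_apply, ← LinearMap.rTensor_comp, hcomm]
  simp only [s12, LinearMap.comp_apply, LinearEquiv.coe_coe, h1, h2, hco]

lemma m3_plumb (t : M ⊗[k] (M ⊗[k] M)) :
    (LinearMap.lTensor (M ⊗[k] M) Δm) ((TensorProduct.assoc k M M M).symm t)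
      = (TensorProduct.assoc k M M (M ⊗[k] M)).symm
          ((LinearMap.lTensor M (LinearMap.lTensor M Δm)) t) := by
  induction t with
  | zero => simp
  | tmul a s =>
      induction s with
      | zero => simp [TensorProduct.tmul_zero]
      | tmul b c => simp [TensorProduct.assoc_symm_tmul]
      | add s1 s2 h1 h2 => simp only [TensorProduct.tmul_add, map_add, h1, h2]
  | add t1 t2 h1 h2 => simp only [map_add, h1, h2]

lemma m2_plumb (v : (M ⊗[k] M) ⊗[k] M) :
    (TensorProduct.tensorTensorTensorComm k M M M M)
        ((LinearMap.lTensor (M ⊗[k] M) Δm) v)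
      = (TensorProduct.assoc k M M (M ⊗[k] M)).symm
          ((LinearMap.lTensor M (s12 ∘ₗ Δm.lTensor M)) ((TensorProduct.assoc k M M M) v)) := by
  induction v with
  | zero => simp
  | tmul s c =>
      induction s with
      | zero => simp [TensorProduct.zero_tmul]
      | tmul a b =>
          simp only [LinearMap.lTensor_tmul, TensorProduct.assoc_tmul, LinearMap.comp_apply]
          generalize Δm c = w
          induction w with
          | zero => simp [TensorProduct.tmul_zero]
          | tmul p q =>
              simp [s12, TensorProduct.assoc_symm_tmul,
                TensorProduct.tensorTensorTensorComm_tmul, TensorProduct.comm_tmul,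
                TensorProduct.assoc_tmul]
          | add w1 w2 h1 h2 => simp only [TensorProduct.tmul_add, map_add, h1, h2]
      | add s1 s2 h1 h2 => simp only [TensorProduct.add_tmul, map_add, h1, h2]
  | add v1 v2 h1 h2 => simp only [map_add, h1, h2]

lemma midswap
    (hco : ∀ u : M, (TensorProduct.assoc k M M M) ((Δm.rTensor M) (Δm u)) = (Δm.lTensor M) (Δm u))
    (hcc : ∀ u : M, (TensorProduct.comm k M M) (Δm u) = Δm u) (u : M) :
    (TensorProduct.tensorTensorTensorComm k M M M M) (TensorProduct.map Δm Δm (Δm u))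
      = TensorProduct.map Δm Δm (Δm u) := by
  have hv : (TensorProduct.assoc k M M M).symm ((Δm.lTensor M) (Δm u))
      = (Δm.rTensor M) (Δm u) := by
    rw [← hco]; exact (TensorProduct.assoc k M M M).symm_apply_apply _
  have hX : TensorProduct.map Δm Δm (Δm u)
      = (LinearMap.lTensor (M ⊗[k] M) Δm) ((Δm.rTensor M) (Δm u)) := by
    rw [← LinearMap.lTensor_comp_rTensor, LinearMap.comp_apply]
  have hfix : (s12 ∘ₗ Δm.lTensor M) ∘ₗ Δm = Δm.lTensor M ∘ₗ Δm :=
    LinearMap.ext (fun c => s12_fix Δm hco hcc c)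
  calc (TensorProduct.tensorTensorTensorComm k M M M M) (TensorProduct.map Δm Δm (Δm u))
      = (TensorProduct.assoc k M M (M ⊗[k] M)).symm
          ((LinearMap.lTensor M (s12 ∘ₗ Δm.lTensor M))
            ((TensorProduct.assoc k M M M) ((Δm.rTensor M) (Δm u)))) := by
        rw [hX, m2_plumb]
    _ = (TensorProduct.assoc k M M (M ⊗[k] M)).symm
          ((LinearMap.lTensor M (Δm.lTensor M)) ((Δm.lTensor M) (Δm u))) := by
        rw [hco, ← LinearMap.comp_apply, ← LinearMap.lTensor_comp, hfix,
          LinearMap.lTensor_comp, LinearMap.comp_apply]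
    _ = TensorProduct.map Δm Δm (Δm u) := by
        rw [← m3_plumb, hv, hX]

end Midswap

end Helpers

end FormalLoops
namespace FormalLoops

section Helpers2

variable {k : Type*} [Field k]
variable {A B : Type*} [AddCommGroup A] [Module k A] [AddCommGroup B] [Module k B]

open TensorProduct LinearMap

lemma ttc_natural {V W : Type*} [AddCommGroup V] [Module k V] [AddCommGroup W] [Module k W]
    (f : V →ₗ[k] A) (g : W →ₗ[k] A) (t : (V ⊗[k] W) ⊗[k] (V ⊗[k] W)) :
    (TensorProduct.tensorTensorTensorComm k A A A A)
        (TensorProduct.map (TensorProduct.map f g) (TensorProduct.map f g) t)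
      = TensorProduct.map (TensorProduct.map f f) (TensorProduct.map g g)
          ((TensorProduct.tensorTensorTensorComm k V W V W) t) := by
  have h := TensorProduct.ext_fourfold'
    (φ := (TensorProduct.tensorTensorTensorComm k A A A A).toLinearMap ∘ₗ
        TensorProduct.map (TensorProduct.map f g) (TensorProduct.map f g))
    (ψ := (TensorProduct.map (TensorProduct.map f f) (TensorProduct.map g g)) ∘ₗ
        (TensorProduct.tensorTensorTensorComm k V W V W).toLinearMap)
    (fun w x y z => by simp [TensorProduct.tensorTensorTensorComm_tmul])
  simpa using LinearMap.congr_fun h t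

lemma Fsub_pi (SA : DivBialg k A) (oneB : B) (π : A →ₗ[k] B) :
    ∀ x ∈ Fsub k SA oneB π, π x = SA.ε x • oneB := by
  intro x hx
  have hle : Fsub k SA oneB π ≤ LinearMap.ker (π - SA.ε.smulRight oneB) := by
    apply sSup_le
    rintro D ⟨hD1, hD2⟩ y hy
    simp only [LinearMap.mem_ker, LinearMap.sub_apply, LinearMap.smulRight_apply]
    rw [hD2 y hy, sub_self]
  have h2 := hle hx
  simp only [LinearMap.mem_ker, LinearMap.sub_apply, LinearMap.smulRight_apply] at h2
  exact sub_eq_zero.mp h2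

lemma Fsub_subcoalg (SA : DivBialg k A) (oneB : B) (π : A →ₗ[k] B) :
    IsSubcoalg k SA.Δ (Fsub k SA oneB π) := by
  intro x hx
  have hle : Fsub k SA oneB π ≤ Submodule.comap SA.Δ
      (LinearMap.range (TensorProduct.map (Fsub k SA oneB π).subtype
        (Fsub k SA oneB π).subtype)) := by
    apply sSup_le
    rintro D ⟨hD1, hD2⟩ y hy
    exact Submodule.mem_comap.2
      (range_map_subtype_mono (le_sSup (Set.mem_setOf.2 ⟨hD1, hD2⟩)) (hD1 y hy))
  exact hle hx

lemma one_mem_Fsub (SA : DivBialg k A) (SB : DivBialg k B) (π : A →ₗ[k] B)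
    (hπ : DivBialgHom k SA SB π) : SA.one ∈ Fsub k SA SB.one π := by
  have hone : SA.one ∈ (k ∙ SA.one) := Submodule.mem_span_singleton_self _
  have hD : (k ∙ SA.one) ∈ {D : Submodule k A |
      IsSubcoalg k SA.Δ D ∧ ∀ x ∈ D, π x = SA.ε x • SB.one} := by
    constructor
    · intro x hx
      obtain ⟨c, rfl⟩ := Submodule.mem_span_singleton.mp hx
      refine ⟨c • ((⟨SA.one, hone⟩ : k ∙ SA.one) ⊗ₜ[k] (⟨SA.one, hone⟩ : k ∙ SA.one)), ?_⟩
      simp [SA.Δ_one]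
    · intro x hx
      obtain ⟨c, rfl⟩ := Submodule.mem_span_singleton.mp hx
      simp [hπ.map_one, SA.ε_one]
  exact le_sSup hD hone

lemma ttc_map₂_mul (SA : DivBialg k A) (p p' q q' : A ⊗[k] A) :
    (TensorProduct.tensorTensorTensorComm k A A A A)
        ((TensorProduct.map₂ SA.mul SA.mul p q) ⊗ₜ[k] (TensorProduct.map₂ SA.mul SA.mul p' q'))
      = TensorProduct.map₂ (TensorProduct.map₂ SA.mul SA.mul) (TensorProduct.map₂ SA.mul SA.mul)
          ((TensorProduct.tensorTensorTensorComm k A A A A) (p ⊗ₜ[k] p'))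
          ((TensorProduct.tensorTensorTensorComm k A A A A) (q ⊗ₜ[k] q')) := by
  induction p with
  | zero => simp
  | add p1 p2 h1 h2 =>
      simp only [map_add, LinearMap.add_apply, TensorProduct.add_tmul, h1, h2]
  | tmul a b =>
    induction p' with
    | zero => simp
    | add p1 p2 h1 h2 =>
        simp only [map_add, LinearMap.add_apply, TensorProduct.add_tmul,
          TensorProduct.tmul_add, h1, h2]
    | tmul c d =>
      induction q with
      | zero => simp
      | add q1 q2 h1 h2 =>
          simp only [map_add, LinearMap.add_apply, TensorProduct.add_tmul,
            TensorProduct.tmul_add, h1, h2]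
      | tmul e f =>
        induction q' with
        | zero => simp
        | add q1 q2 h1 h2 =>
            simp only [map_add, LinearMap.add_apply, TensorProduct.add_tmul,
              TensorProduct.tmul_add, h1, h2]
        | tmul g h =>
            simp [TensorProduct.map₂_apply_tmul,
              TensorProduct.tensorTensorTensorComm_tmul]

lemma tcomul_map₂ (SA : DivBialg k A) (t t' : A ⊗[k] A) :
    tcomul k SA (TensorProduct.map₂ SA.mul SA.mul t t')
      = TensorProduct.map₂ (TensorProduct.map₂ SA.mul SA.mul) (TensorProduct.map₂ SA.mul SA.mul)
          (tcomul k SA t) (tcomul k SA t') := by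
  induction t with
  | zero => simp
  | add a b h1 h2 => simp only [map_add, LinearMap.add_apply, h1, h2]
  | tmul u v =>
    induction t' with
    | zero => simp
    | add a b h1 h2 => simp only [map_add, LinearMap.add_apply, h1, h2]
    | tmul u' v' =>
      simp only [TensorProduct.map₂_apply_tmul, TensorProduct.map_tmul, tcomul,
        LinearMap.comp_apply, LinearEquiv.coe_coe]
      rw [SA.Δ_mul, SA.Δ_mul]
      exact ttc_map₂_mul SA (SA.Δ u) (SA.Δ v) (SA.Δ u') (SA.Δ v')

lemma pbFst_map₂ (SA : DivBialg k A) (SB : DivBialg k B) (π : A →ₗ[k] B)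
    (hπ : DivBialgHom k SA SB π) (t t' : A ⊗[k] A) :
    pbFst k SA π (TensorProduct.map₂ SA.mul SA.mul t t')
      = SB.mul (pbFst k SA π t) (pbFst k SA π t') := by
  induction t with
  | zero => simp
  | add a b h1 h2 => simp only [map_add, LinearMap.add_apply, h1, h2]
  | tmul u v =>
    induction t' with
    | zero => simp
    | add a b h1 h2 => simp only [map_add, LinearMap.add_apply, h1, h2]
    | tmul u' v' =>
      simp only [TensorProduct.map₂_apply_tmul, TensorProduct.map_tmul, pbFst,
        LinearMap.comp_apply, LinearEquiv.coe_coe, TensorProduct.rid_tmul]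
      rw [SA.ε_mul, hπ.map_mul]
      simp [map_smul, LinearMap.smul_apply, smul_smul, mul_comm]

lemma pbSnd_map₂ (SA : DivBialg k A) (SB : DivBialg k B) (π : A →ₗ[k] B)
    (hπ : DivBialgHom k SA SB π) (t t' : A ⊗[k] A) :
    pbSnd k SA π (TensorProduct.map₂ SA.mul SA.mul t t')
      = SB.mul (pbSnd k SA π t) (pbSnd k SA π t') := by
  induction t with
  | zero => simp
  | add a b h1 h2 => simp only [map_add, LinearMap.add_apply, h1, h2]
  | tmul u v =>
    induction t' with
    | zero => simp
    | add a b h1 h2 => simp only [map_add, LinearMap.add_apply, h1, h2]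
    | tmul u' v' =>
      simp only [TensorProduct.map₂_apply_tmul, TensorProduct.map_tmul, pbSnd,
        LinearMap.comp_apply, LinearEquiv.coe_coe, TensorProduct.lid_tmul]
      rw [SA.ε_mul, hπ.map_mul]
      simp [map_smul, LinearMap.smul_apply, smul_smul, mul_comm]

end Helpers2

end FormalLoops
namespace FormalLoops

section Helpers3

variable {k : Type*} [Field k]
variable {A B : Type*} [AddCommGroup A] [Module k A] [AddCommGroup B] [Module k B]

open TensorProduct LinearMap

lemma le_pbSub (SA : DivBialg k A) (π : A →ₗ[k] B) {C : Submodule k (A ⊗[k] A)}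
    (h1 : IsSubcoalg k (tcomul k SA) C)
    (h2 : ∀ t ∈ C, pbFst k SA π t = pbSnd k SA π t) : C ≤ pbSub k SA π :=
  le_sSup (Set.mem_setOf.2 ⟨h1, h2⟩)

lemma bp_congr (SA : DivBialg k A) (SB : DivBialg k B) (π : A →ₗ[k] B) (z : B →ₗ[k] A)
    (P : BoxPlusData k SA SB π z) {t s : A ⊗[k] A}
    (ht : t ∈ pbSub k SA π) (hs : s ∈ pbSub k SA π) (e : t = s) :
    P.bp ⟨t, ht⟩ = P.bp ⟨s, hs⟩ := by subst e; rfl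

/-- `β`: componentwise multiplication as a bilinear map into `Submodule.map₂`. -/
noncomputable def beta (SA : DivBialg k A) (C₁ C₂ : Submodule k (A ⊗[k] A)) :
    C₁ →ₗ[k] C₂ →ₗ[k] ↥(Submodule.map₂ (TensorProduct.map₂ SA.mul SA.mul) C₁ C₂) :=
  LinearMap.mk₂ k (fun a b => ⟨TensorProduct.map₂ SA.mul SA.mul ↑a ↑b,
      Submodule.apply_mem_map₂ _ a.2 b.2⟩)
    (fun a a' b => Subtype.ext (by simp [map_add, LinearMap.add_apply]))
    (fun c a b => Subtype.ext (by simp))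
    (fun a b b' => Subtype.ext (by simp))
    (fun c a b => Subtype.ext (by simp))

lemma map₂_beta (SA : DivBialg k A) (C₁ C₂ : Submodule k (A ⊗[k] A))
    (ah : C₁ ⊗[k] C₁) (bh : C₂ ⊗[k] C₂) :
    TensorProduct.map₂ (TensorProduct.map₂ SA.mul SA.mul) (TensorProduct.map₂ SA.mul SA.mul)
        (TensorProduct.map C₁.subtype C₁.subtype ah) (TensorProduct.map C₂.subtype C₂.subtype bh)
      = TensorProduct.map (Submodule.map₂ (TensorProduct.map₂ SA.mul SA.mul) C₁ C₂).subtype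
          (Submodule.map₂ (TensorProduct.map₂ SA.mul SA.mul) C₁ C₂).subtype
          (TensorProduct.map₂ (beta SA C₁ C₂) (beta SA C₁ C₂) ah bh) := by
  induction ah with
  | zero => simp
  | add a1 a2 h1 h2 => simp only [map_add, LinearMap.add_apply, h1, h2]
  | tmul a a' =>
    induction bh with
    | zero => simp
    | add b1 b2 h1 h2 => simp only [map_add, LinearMap.add_apply, h1, h2]
    | tmul b b' =>
        simp only [TensorProduct.map_tmul, TensorProduct.map₂_apply_tmul]
        rfl

lemma map₂_pbMem (SA : DivBialg k A) (SB : DivBialg k B) (π : A →ₗ[k] B)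
    (hπ : DivBialgHom k SA SB π) {C₁ C₂ : Submodule k (A ⊗[k] A)}
    (h₁sub : IsSubcoalg k (tcomul k SA) C₁)
    (h₁pb : ∀ t ∈ C₁, pbFst k SA π t = pbSnd k SA π t)
    (h₂sub : IsSubcoalg k (tcomul k SA) C₂)
    (h₂pb : ∀ t ∈ C₂, pbFst k SA π t = pbSnd k SA π t) :
    IsSubcoalg k (tcomul k SA) (Submodule.map₂ (TensorProduct.map₂ SA.mul SA.mul) C₁ C₂)
      ∧ ∀ t ∈ Submodule.map₂ (TensorProduct.map₂ SA.mul SA.mul) C₁ C₂,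
          pbFst k SA π t = pbSnd k SA π t := by
  set C := Submodule.map₂ (TensorProduct.map₂ SA.mul SA.mul) C₁ C₂ with hC
  constructor
  · have hle : C ≤ Submodule.comap (tcomul k SA)
        (LinearMap.range (TensorProduct.map C.subtype C.subtype)) := by
      apply Submodule.map₂_le.2
      intro a ha b hb
      obtain ⟨ah, hah⟩ := h₁sub a ha
      obtain ⟨bh, hbh⟩ := h₂sub b hb
      refine Submodule.mem_comap.2 ?_
      rw [tcomul_map₂, ← hah, ← hbh, map₂_beta]
      exact LinearMap.mem_range_self _ _
    exact fun t ht => Submodule.mem_comap.mp (hle ht)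
  · have hle : C ≤ LinearMap.ker (pbFst k SA π - pbSnd k SA π) := by
      apply Submodule.map₂_le.2
      intro a ha b hb
      rw [LinearMap.mem_ker, LinearMap.sub_apply, pbFst_map₂ SA SB π hπ,
        pbSnd_map₂ SA SB π hπ, h₁pb a ha, h₂pb b hb, sub_self]
    intro t ht
    have h2 := hle ht
    rw [LinearMap.mem_ker, LinearMap.sub_apply] at h2
    exact sub_eq_zero.mp h2

lemma CF_subcoalg (SA : DivBialg k A) (oneB : B) (π : A →ₗ[k] B) :
    IsSubcoalg k (tcomul k SA)
      (LinearMap.range (TensorProduct.map (Fsub k SA oneB π).subtype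
        (Fsub k SA oneB π).subtype)) := by
  set F := Fsub k SA oneB π with hFdef
  set CF := LinearMap.range (TensorProduct.map F.subtype F.subtype) with hCF
  set ρ : F ⊗[k] F →ₗ[k] CF :=
    LinearMap.codRestrict CF (TensorProduct.map F.subtype F.subtype)
      (fun s => LinearMap.mem_range_self _ s) with hρ
  have hfac : CF.subtype ∘ₗ ρ = TensorProduct.map F.subtype F.subtype :=
    LinearMap.subtype_comp_codRestrict _ _ _
  rintro t ⟨s, rfl⟩
  induction s with
  | zero => simpa using Submodule.zero_mem _
  | add s1 s2 h1 h2 =>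
      rw [map_add, map_add]; exact Submodule.add_mem _ h1 h2
  | tmul x y =>
    obtain ⟨p, hp⟩ := Fsub_subcoalg SA oneB π ↑x x.2
    obtain ⟨q, hq⟩ := Fsub_subcoalg SA oneB π ↑y y.2
    refine ⟨TensorProduct.map ρ ρ ((TensorProduct.tensorTensorTensorComm k F F F F)
      (p ⊗ₜ[k] q)), ?_⟩
    have h1 : TensorProduct.map CF.subtype CF.subtype
        (TensorProduct.map ρ ρ ((TensorProduct.tensorTensorTensorComm k F F F F) (p ⊗ₜ[k] q)))
        = TensorProduct.map (TensorProduct.map F.subtype F.subtype)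
            (TensorProduct.map F.subtype F.subtype)
            ((TensorProduct.tensorTensorTensorComm k F F F F) (p ⊗ₜ[k] q)) := by
      rw [← LinearMap.comp_apply, ← TensorProduct.map_comp, hfac]
    rw [h1, ← ttc_natural]
    simp only [tcomul, LinearMap.comp_apply, LinearEquiv.coe_coe, TensorProduct.map_tmul, hp,
      hq, Submodule.coe_subtype]
    exact congrArg (TensorProduct.tensorTensorTensorComm k A A A A)
      (congrArg₂ (fun a b => a ⊗ₜ[k] b) hp hq)

lemma CF_pb (SA : DivBialg k A) (SB : DivBialg k B) (π : A →ₗ[k] B) :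
    ∀ t ∈ LinearMap.range (TensorProduct.map (Fsub k SA SB.one π).subtype
        (Fsub k SA SB.one π).subtype),
      pbFst k SA π t = pbSnd k SA π t := by
  set F := Fsub k SA SB.one π with hFdef
  intro t ht
  have hle : LinearMap.range (TensorProduct.map F.subtype F.subtype)
      ≤ LinearMap.ker (pbFst k SA π - pbSnd k SA π) := by
    rw [LinearMap.range_le_ker_iff]
    apply TensorProduct.ext'
    intro x y
    simp only [LinearMap.comp_apply, TensorProduct.map_tmul, LinearMap.sub_apply,
      LinearMap.zero_apply, pbFst, pbSnd, LinearEquiv.coe_coe, TensorProduct.rid_tmul,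
      TensorProduct.lid_tmul, Submodule.coe_subtype]
    rw [Fsub_pi SA SB.one π ↑x x.2, Fsub_pi SA SB.one π ↑y y.2, smul_comm, sub_self]
  have h2 := hle ht
  rw [LinearMap.mem_ker, LinearMap.sub_apply] at h2
  exact sub_eq_zero.mp h2

lemma C2_subcoalg (SA : DivBialg k A) (SB : DivBialg k B) (z : B →ₗ[k] A)
    (hz : DivBialgHom k SB SA z) :
    IsSubcoalg k (tcomul k SA) (LinearMap.range (TensorProduct.map z z ∘ₗ SB.Δ)) := by
  set ψ : B →ₗ[k] A ⊗[k] A := TensorProduct.map z z ∘ₗ SB.Δ with hψ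
  set C2 := LinearMap.range ψ with hC2
  set ρ : B →ₗ[k] C2 := LinearMap.codRestrict C2 ψ (fun s => LinearMap.mem_range_self _ s) with hρ
  have hfac : C2.subtype ∘ₗ ρ = ψ := LinearMap.subtype_comp_codRestrict _ _ _
  rintro t ⟨b, rfl⟩
  have hzz : SA.Δ ∘ₗ z = TensorProduct.map z z ∘ₗ SB.Δ :=
    LinearMap.ext (fun u => (hz.map_Δ u).symm)
  have key : tcomul k SA (ψ b) = TensorProduct.map ψ ψ (SB.Δ b) := by
    have h1 : TensorProduct.map SA.Δ SA.Δ (TensorProduct.map z z (SB.Δ b))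
        = TensorProduct.map (TensorProduct.map z z) (TensorProduct.map z z)
            (TensorProduct.map SB.Δ SB.Δ (SB.Δ b)) := by
      rw [← LinearMap.comp_apply, ← TensorProduct.map_comp, hzz, TensorProduct.map_comp,
        LinearMap.comp_apply]
    calc tcomul k SA (ψ b)
        = (TensorProduct.tensorTensorTensorComm k A A A A)
            (TensorProduct.map SA.Δ SA.Δ (TensorProduct.map z z (SB.Δ b))) := rfl
      _ = (TensorProduct.tensorTensorTensorComm k A A A A)
            (TensorProduct.map (TensorProduct.map z z) (TensorProduct.map z z)
              (TensorProduct.map SB.Δ SB.Δ (SB.Δ b))) := by rw [h1]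
      _ = TensorProduct.map (TensorProduct.map z z) (TensorProduct.map z z)
            ((TensorProduct.tensorTensorTensorComm k B B B B)
              (TensorProduct.map SB.Δ SB.Δ (SB.Δ b))) := ttc_natural z z _
      _ = TensorProduct.map (TensorProduct.map z z) (TensorProduct.map z z)
            (TensorProduct.map SB.Δ SB.Δ (SB.Δ b)) := by
          rw [midswap SB.Δ SB.coassoc SB.cocomm b]
      _ = TensorProduct.map ψ ψ (SB.Δ b) := by
          rw [hψ, TensorProduct.map_comp, LinearMap.comp_apply]
  rw [key, ← hfac, TensorProduct.map_comp, LinearMap.comp_apply]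
  exact LinearMap.mem_range_self _ _

lemma C2_pb (SA : DivBialg k A) (SB : DivBialg k B) (π : A →ₗ[k] B) (z : B →ₗ[k] A)
    (hz : DivBialgHom k SB SA z) (hsec : π ∘ₗ z = LinearMap.id) :
    ∀ t ∈ LinearMap.range (TensorProduct.map z z ∘ₗ SB.Δ),
      pbFst k SA π t = pbSnd k SA π t := by
  rintro t ⟨b, rfl⟩
  have hπz : ∀ c : B, π (z c) = c := fun c => by
    have := LinearMap.congr_fun hsec c; simpa using this
  have h1 : ∀ s : B ⊗[k] B, pbFst k SA π (TensorProduct.map z z s)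
      = (TensorProduct.rid k B) ((SB.ε.lTensor B) s) := by
    intro s
    induction s with
    | zero => simp
    | add a b h1 h2 => simp only [map_add, h1, h2]
    | tmul c d =>
        simp only [TensorProduct.map_tmul, pbFst, LinearMap.comp_apply, LinearEquiv.coe_coe,
          TensorProduct.rid_tmul, LinearMap.lTensor_tmul, hπz c, hz.map_ε d]
  have h2 : ∀ s : B ⊗[k] B, pbSnd k SA π (TensorProduct.map z z s)
      = (TensorProduct.lid k B) ((SB.ε.rTensor B) s) := by
    intro s
    induction s with
    | zero => simp
    | add a b h1 h2 => simp only [map_add, h1, h2]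
    | tmul c d =>
        simp only [TensorProduct.map_tmul, pbSnd, LinearMap.comp_apply, LinearEquiv.coe_coe,
          TensorProduct.lid_tmul, LinearMap.rTensor_tmul, hπz d, hz.map_ε c]
  calc pbFst k SA π ((TensorProduct.map z z ∘ₗ SB.Δ) b)
      = (TensorProduct.rid k B) ((SB.ε.lTensor B) (SB.Δ b)) := h1 (SB.Δ b)
    _ = b := SB.counit_right b
    _ = (TensorProduct.lid k B) ((SB.ε.rTensor B) (SB.Δ b)) := (SB.counit_left b).symm
    _ = pbSnd k SA π ((TensorProduct.map z z ∘ₗ SB.Δ) b) := (h2 (SB.Δ b)).symm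

end Helpers3

end FormalLoops
namespace FormalLoops

section Helpers4

variable {k : Type*} [Field k]
variable {A B : Type*} [AddCommGroup A] [Module k A] [AddCommGroup B] [Module k B]

open TensorProduct LinearMap

lemma t0_eq (SA : DivBialg k A) (z : B →ₗ[k] A) (x x' : A) (s : B ⊗[k] B) :
    TensorProduct.map (SA.mul x ∘ₗ z) (SA.mul x' ∘ₗ z) s
      = TensorProduct.map₂ SA.mul SA.mul (x ⊗ₜ[k] x') (TensorProduct.map z z s) := by
  rw [TensorProduct.map₂_apply_tmul, ← LinearMap.comp_apply, ← TensorProduct.map_comp]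

lemma t0'_eq (SA : DivBialg k A) (z : B →ₗ[k] A) (x x' : A) (s : B ⊗[k] B) :
    TensorProduct.map (SA.mul.flip x ∘ₗ z) (SA.mul.flip x' ∘ₗ z) s
      = TensorProduct.map₂ SA.mul SA.mul (TensorProduct.map z z s) (x ⊗ₜ[k] x') := by
  induction s with
  | zero => simp
  | add a b h1 h2 => simp only [map_add, LinearMap.add_apply, h1, h2]
  | tmul c d => simp [TensorProduct.map₂_apply_tmul]

lemma lTensor_zpi_Fsub (SA : DivBialg k A) (SB : DivBialg k B) (π : A →ₗ[k] B) (z : B →ₗ[k] A)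
    (hz : DivBialgHom k SB SA z) {x : A} (hx : x ∈ Fsub k SA SB.one π) :
    (LinearMap.lTensor A (z ∘ₗ π)) (SA.Δ x) = x ⊗ₜ[k] SA.one := by
  set F := Fsub k SA SB.one π with hFdef
  obtain ⟨p, hp⟩ := Fsub_subcoalg SA SB.one π x hx
  have key : ∀ p : F ⊗[k] F,
      (LinearMap.lTensor A (z ∘ₗ π)) (TensorProduct.map F.subtype F.subtype p)
        = ((TensorProduct.rid k A) ((SA.ε.lTensor A)
            (TensorProduct.map F.subtype F.subtype p))) ⊗ₜ[k] SA.one := by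
    intro p
    induction p with
    | zero => simp
    | add a b h1 h2 => simp only [map_add, h1, h2, TensorProduct.add_tmul]
    | tmul y y' =>
        simp only [TensorProduct.map_tmul, LinearMap.lTensor_tmul, LinearMap.comp_apply,
          LinearEquiv.coe_coe, TensorProduct.rid_tmul, Submodule.coe_subtype]
        rw [Fsub_pi SA SB.one π ↑y' y'.2, map_smul, hz.map_one,
          TensorProduct.tmul_smul, TensorProduct.smul_tmul']
  rw [← hp, key p, hp, SA.counit_right]

lemma rTensor_zpi_Fsub (SA : DivBialg k A) (SB : DivBialg k B) (π : A →ₗ[k] B) (z : B →ₗ[k] A)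
    (hz : DivBialgHom k SB SA z) {x : A} (hx : x ∈ Fsub k SA SB.one π) :
    (LinearMap.rTensor A (z ∘ₗ π)) (SA.Δ x) = SA.one ⊗ₜ[k] x := by
  set F := Fsub k SA SB.one π with hFdef
  obtain ⟨p, hp⟩ := Fsub_subcoalg SA SB.one π x hx
  have key : ∀ p : F ⊗[k] F,
      (LinearMap.rTensor A (z ∘ₗ π)) (TensorProduct.map F.subtype F.subtype p)
        = SA.one ⊗ₜ[k] ((TensorProduct.lid k A) ((SA.ε.rTensor A)
            (TensorProduct.map F.subtype F.subtype p))) := by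
    intro p
    induction p with
    | zero => simp
    | add a b h1 h2 => simp only [map_add, h1, h2, TensorProduct.tmul_add]
    | tmul y y' =>
        simp only [TensorProduct.map_tmul, LinearMap.rTensor_tmul, LinearMap.comp_apply,
          LinearEquiv.coe_coe, TensorProduct.lid_tmul, Submodule.coe_subtype]
        rw [Fsub_pi SA SB.one π ↑y y.2, map_smul, hz.map_one,
          TensorProduct.smul_tmul, TensorProduct.tmul_smul]
  rw [← hp, key p, hp, SA.counit_left]

lemma lTensor_zpi_z (SA : DivBialg k A) (SB : DivBialg k B) (π : A →ₗ[k] B) (z : B →ₗ[k] A)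
    (hz : DivBialgHom k SB SA z) (hsec : π ∘ₗ z = LinearMap.id) (b : B) :
    (LinearMap.lTensor A (z ∘ₗ π)) (SA.Δ (z b)) = TensorProduct.map z z (SB.Δ b) := by
  have hπz : ∀ c : B, π (z c) = c := fun c => by
    have := LinearMap.congr_fun hsec c; simpa using this
  rw [← hz.map_Δ b]
  generalize SB.Δ b = s
  induction s with
  | zero => simp
  | add a b h1 h2 => simp only [map_add, h1, h2]
  | tmul c d =>
      simp only [TensorProduct.map_tmul, LinearMap.lTensor_tmul, LinearMap.comp_apply, hπz d]

end Helpers4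

end FormalLoops
open FormalLoops in
/-- for `x, x' ∈ F(A)` and `b ∈ B` (acting through `z`),
`(x·x')·b = ⊞(Σ (x·b₍₁₎) ⊗ (x'·b₍₂₎))` and `b·(x·x') = ⊞(Σ (b₍₁₎·x) ⊗ (b₍₂₎·x'))`,
and in particular the displayed tensors lie in `A ⊗_B A`. -/
theorem fsub_distributive
    (k : Type*) [Field k] [CharZero k]
    {A B : Type*} [AddCommGroup A] [Module k A] [AddCommGroup B] [Module k B]
    (SA : DivBialg k A) (SB : DivBialg k B)
    (π : A →ₗ[k] B) (z : B →ₗ[k] A)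
    (hπ : DivBialgHom k SA SB π) (hz : DivBialgHom k SB SA z)
    (hsec : π ∘ₗ z = LinearMap.id)
    (P : BoxPlusData k SA SB π z)
    (F : Submodule k A) (hF : F = Fsub k SA SB.one π) :
    ∀ x ∈ F, ∀ x' ∈ F, ∀ b : B,
      (∃ h : TensorProduct.map (SA.mul x ∘ₗ z) (SA.mul x' ∘ₗ z) (SB.Δ b) ∈ pbSub k SA π,
        SA.mul (SA.mul x x') (z b)
          = P.bp ⟨TensorProduct.map (SA.mul x ∘ₗ z) (SA.mul x' ∘ₗ z) (SB.Δ b), h⟩) ∧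
      (∃ h : TensorProduct.map (SA.mul.flip x ∘ₗ z) (SA.mul.flip x' ∘ₗ z) (SB.Δ b)
              ∈ pbSub k SA π,
        SA.mul (z b) (SA.mul x x')
          = P.bp ⟨TensorProduct.map (SA.mul.flip x ∘ₗ z) (SA.mul.flip x' ∘ₗ z) (SB.Δ b), h⟩) := by
  subst hF
  intro x hx x' hx' b
  set F := Fsub k SA SB.one π with hFdef
  have hCFsub := CF_subcoalg SA SB.one π
  have hCFpb := CF_pb SA SB π
  have hC2sub := C2_subcoalg SA SB z hz
  have hC2pb := C2_pb SA SB π z hz hsec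
  have hCFle : LinearMap.range (TensorProduct.map F.subtype F.subtype) ≤ pbSub k SA π :=
    le_pbSub SA π hCFsub hCFpb
  have hC2le : LinearMap.range (TensorProduct.map z z ∘ₗ SB.Δ) ≤ pbSub k SA π :=
    le_pbSub SA π hC2sub hC2pb
  obtain ⟨hPsub, hPpb⟩ := map₂_pbMem SA SB π hπ hCFsub hCFpb hC2sub hC2pb
  obtain ⟨hQsub, hQpb⟩ := map₂_pbMem SA SB π hπ hC2sub hC2pb hCFsub hCFpb
  have hPle := le_pbSub SA π hPsub hPpb
  have hQle := le_pbSub SA π hQsub hQpb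
  have h1F : SA.one ∈ F := one_mem_Fsub SA SB π hπ
  have hxx'CF : x ⊗ₜ[k] x' ∈ LinearMap.range (TensorProduct.map F.subtype F.subtype) :=
    ⟨(⟨x, hx⟩ : F) ⊗ₜ[k] (⟨x', hx'⟩ : F), by simp⟩
  have hx1CF : x ⊗ₜ[k] SA.one ∈ LinearMap.range (TensorProduct.map F.subtype F.subtype) :=
    ⟨(⟨x, hx⟩ : F) ⊗ₜ[k] (⟨SA.one, h1F⟩ : F), by simp⟩
  have h1x'CF : SA.one ⊗ₜ[k] x' ∈ LinearMap.range (TensorProduct.map F.subtype F.subtype) :=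
    ⟨(⟨SA.one, h1F⟩ : F) ⊗ₜ[k] (⟨x', hx'⟩ : F), by simp⟩
  have hψb : TensorProduct.map z z (SB.Δ b)
      ∈ LinearMap.range (TensorProduct.map z z ∘ₗ SB.Δ) := ⟨b, rfl⟩
  set tx : ↥(pbSub k SA π) := ⟨x ⊗ₜ[k] x', hCFle hxx'CF⟩ with htx
  set tb : ↥(pbSub k SA π) := ⟨TensorProduct.map z z (SB.Δ b), hC2le hψb⟩ with htb
  set t1 : ↥(pbSub k SA π) := ⟨x ⊗ₜ[k] SA.one, hCFle hx1CF⟩ with ht1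
  set t2 : ↥(pbSub k SA π) := ⟨SA.one ⊗ₜ[k] x', hCFle h1x'CF⟩ with ht2
  have hbtb : P.bp tb = z b := by
    have hmem : (LinearMap.lTensor A (z ∘ₗ π)) (SA.Δ (z b)) ∈ pbSub k SA π := by
      rw [lTensor_zpi_z SA SB π z hz hsec b]; exact hC2le hψb
    have h := P.bp_unit_right (z b) hmem
    rw [← h]
    exact bp_congr SA SB π z P _ _ (lTensor_zpi_z SA SB π z hz hsec b).symm
  have hbt1 : P.bp t1 = x := by
    have hmem : (LinearMap.lTensor A (z ∘ₗ π)) (SA.Δ x) ∈ pbSub k SA π := by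
      rw [lTensor_zpi_Fsub SA SB π z hz hx]; exact hCFle hx1CF
    have h := P.bp_unit_right x hmem
    rw [← h]
    exact bp_congr SA SB π z P _ _ (lTensor_zpi_Fsub SA SB π z hz hx).symm
  have hbt2 : P.bp t2 = x' := by
    have hmem : (LinearMap.rTensor A (z ∘ₗ π)) (SA.Δ x') ∈ pbSub k SA π := by
      rw [rTensor_zpi_Fsub SA SB π z hz hx']; exact hCFle h1x'CF
    have h := P.bp_unit_left x' hmem
    rw [← h]
    exact bp_congr SA SB π z P _ _ (rTensor_zpi_Fsub SA SB π z hz hx').symm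
  have hval2 : TensorProduct.map₂ SA.mul SA.mul ((t1 : A ⊗[k] A)) ((t2 : A ⊗[k] A))
      = x ⊗ₜ[k] x' := by
    simp only [ht1, ht2, TensorProduct.map₂_apply_tmul, TensorProduct.map_tmul,
      SA.mul_one, SA.one_mul]
  have hmul12 : TensorProduct.map₂ SA.mul SA.mul ((t1 : A ⊗[k] A)) ((t2 : A ⊗[k] A))
      ∈ pbSub k SA π := by
    rw [hval2]; exact hCFle hxx'CF
  have hbtx : P.bp tx = SA.mul x x' := by
    have e := bp_congr SA SB π z P (hCFle hxx'CF) hmul12 hval2.symm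
    rw [htx, e, P.bp_mul t1 t2 hmul12, hbt1, hbt2]
  constructor
  · have hval : TensorProduct.map (SA.mul x ∘ₗ z) (SA.mul x' ∘ₗ z) (SB.Δ b)
        = TensorProduct.map₂ SA.mul SA.mul ((tx : A ⊗[k] A)) ((tb : A ⊗[k] A)) :=
      t0_eq SA z x x' (SB.Δ b)
    have hmem : TensorProduct.map (SA.mul x ∘ₗ z) (SA.mul x' ∘ₗ z) (SB.Δ b)
        ∈ pbSub k SA π := by
      rw [hval]; exact hPle (Submodule.apply_mem_map₂ _ hxx'CF hψb)
    refine ⟨hmem, ?_⟩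
    have hmem2 : TensorProduct.map₂ SA.mul SA.mul ((tx : A ⊗[k] A)) ((tb : A ⊗[k] A))
        ∈ pbSub k SA π := hval ▸ hmem
    have e := bp_congr SA SB π z P hmem hmem2 hval
    rw [e, P.bp_mul tx tb hmem2, hbtx, hbtb]
  · have hval : TensorProduct.map (SA.mul.flip x ∘ₗ z) (SA.mul.flip x' ∘ₗ z) (SB.Δ b)
        = TensorProduct.map₂ SA.mul SA.mul ((tb : A ⊗[k] A)) ((tx : A ⊗[k] A)) :=
      t0'_eq SA z x x' (SB.Δ b)
    have hmem : TensorProduct.map (SA.mul.flip x ∘ₗ z) (SA.mul.flip x' ∘ₗ z) (SB.Δ b)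
        ∈ pbSub k SA π := by
      rw [hval]; exact hQle (Submodule.apply_mem_map₂ _ hψb hxx'CF)
    refine ⟨hmem, ?_⟩
    have hmem2 : TensorProduct.map₂ SA.mul SA.mul ((tb : A ⊗[k] A)) ((tx : A ⊗[k] A))
        ∈ pbSub k SA π := hval ▸ hmem
    have e := bp_congr SA SB π z P hmem hmem2 hval
    rw [e, P.bp_mul tb tx hmem2, hbtb, hbtx]
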